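/- Let R be a commutative ring, n a natural number, and M an n×n matrix over R. Let Λ ∈ R[[t]] be the power series given by the polynomial det(1 - t·M) (the reversed characteristic polynomial of M). Then in R[[t]] one has the exponential trace formula in cleared-denominator form: -(t · Λ') = Λ · Σ_{k≥1} tr(M^k) t^k, where Λ' denotes the formal derivative of Λ. -/

import Mathlib

open PowerSeries

section Aux
open Polynomial Matrix Finset

variable {R : Type*} [CommRing R]

private lemma derivFinsetProd' {ι : Type*} [DecidableEq ι] (s : Finset ι) (f : ι → R[X]) :
    derivative (∏ i ∈ s, f i) =
      ∑ b ∈ s, (∏ a ∈ s.erase b, f a) * derivative (f b) := by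
  classical
  induction s using Finset.induction with
  | empty => simp
  | insert c s h ih =>
    rw [Finset.prod_insert h, derivative_mul, ih, Finset.sum_insert h,
      Finset.erase_insert h]
    simp only [Finset.mul_sum]
    congr 1
    · rw [mul_comm]
    · refine Finset.sum_congr rfl fun b hb => ?_
      rw [Finset.erase_insert_of_ne (by rintro rfl; exact h hb),
        Finset.prod_insert (fun hc => h (Finset.mem_of_mem_erase hc)), mul_assoc]

private lemma derivative_det_eq {m : Type*} [Fintype m] [DecidableEq m] (A : Matrix m m R[X]) :
    derivative A.det =
      ∑ j, (A.updateCol j fun i => derivative (A i j)).det := by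
  classical
  simp only [Matrix.det_apply']
  rw [map_sum, Finset.sum_comm]
  refine Finset.sum_congr rfl fun σ _ => ?_
  rw [derivative_mul, derivative_intCast, zero_mul, zero_add, derivFinsetProd', Finset.mul_sum]
  refine Finset.sum_congr rfl fun b _ => ?_
  rw [← Finset.mul_prod_erase Finset.univ _ (Finset.mem_univ b)]
  simp only [Matrix.updateCol_apply, if_true]
  rw [Finset.prod_congr rfl fun a ha =>
    if_neg (Finset.ne_of_mem_erase ha)]
  ring

private lemma derivative_one_sub_X_smul {n : ℕ} (M : Matrix (Fin n) (Fin n) R) :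
    derivative (1 - (X : R[X]) • M.map Polynomial.C).det =
      -((1 - (X : R[X]) • M.map Polynomial.C).adjugate * M.map Polynomial.C).trace := by
  classical
  set A := 1 - (X : R[X]) • M.map Polynomial.C with hA
  rw [derivative_det_eq]
  have hcol : ∀ j, (fun i => derivative (A i j)) = -(fun i => (M.map Polynomial.C) i j) := by
    intro j
    funext i
    simp [hA, Matrix.sub_apply, Matrix.one_apply, Matrix.smul_apply, apply_ite derivative]
  have : ∀ j, (A.updateCol j fun i => derivative (A i j)).det
      = -((A.adjugate *ᵥ fun i => (M.map Polynomial.C) i j) j) := by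
    intro j
    rw [hcol j, ← Matrix.cramer_apply, map_neg, ← Matrix.cramer_eq_adjugate_mulVec]
    rfl
  simp only [this]
  rw [Matrix.trace, ← Finset.sum_neg_distrib]
  refine Finset.sum_congr rfl fun j _ => ?_
  rw [Matrix.mulVec, Matrix.diag_apply, Matrix.mul_apply]
  rfl

private lemma one_sub_X_smul_mul_inv {n : ℕ} (M : Matrix (Fin n) (Fin n) R) :
    (1 - (PowerSeries.X : R⟦X⟧) • M.map (PowerSeries.C)) *
      (Matrix.of fun i j => PowerSeries.mk fun k => (M ^ k) i j) = 1 := by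
  ext i j k : 3
  rw [Matrix.mul_apply]
  simp only [Matrix.sub_apply, Matrix.smul_apply, Matrix.one_apply, Matrix.map_apply,
    Matrix.of_apply, sub_mul, smul_eq_mul, Finset.sum_sub_distrib, map_sub, map_sum]
  cases k with
  | zero =>
    simp [apply_ite (PowerSeries.constantCoeff (R := R)), Finset.sum_ite_eq, Matrix.one_apply]
  | succ k =>
    simp only [ite_mul, one_mul, zero_mul,
      apply_ite (PowerSeries.coeff (k+1)), map_zero, Finset.sum_ite_eq,
      Finset.mem_univ, if_true, PowerSeries.coeff_mk]
    have h1 : ∀ l, (PowerSeries.coeff (k+1)) (PowerSeries.X * PowerSeries.C (M i l) *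
        PowerSeries.mk fun k => (M ^ k) l j) = M i l * (M ^ k) l j := by
      intro l
      rw [mul_assoc, PowerSeries.coeff_succ_X_mul, PowerSeries.coeff_C_mul, PowerSeries.coeff_mk]
    rw [Finset.sum_congr rfl fun l _ => h1 l]
    have h2 : (M ^ (k+1)) i j = ∑ l, M i l * (M ^ k) l j := by
      rw [pow_succ']
      exact Matrix.mul_apply
    rw [h2]
    simp [Matrix.one_apply]

end Aux

/-- The exponential trace formula in cleared-denominator form: for a commutative ring `R`
and an `n × n` matrix `M` over `R`, with `Λ = det(1 - t·M)` viewed in `R⟦t⟧`, we have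
`-(t·Λ') = Λ · Σ_{k ≥ 1} tr(M^k) t^k`. -/
theorem exponential_trace_formula (R : Type*) [CommRing R] (n : ℕ)
    (M : Matrix (Fin n) (Fin n) R) :
    -(PowerSeries.X * d⁄dX R
        (((1 - (Polynomial.X : Polynomial R) • M.map Polynomial.C).det : Polynomial R) : R⟦X⟧)) =
      (((1 - (Polynomial.X : Polynomial R) • M.map Polynomial.C).det : Polynomial R) : R⟦X⟧) *
        PowerSeries.mk (fun k => if k = 0 then 0 else (M ^ k).trace) := by
  classical
  set φ : Polynomial R →+* R⟦X⟧ := Polynomial.coeToPowerSeries.ringHom with hφ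
  set A : Matrix (Fin n) (Fin n) (Polynomial R) :=
    1 - (Polynomial.X : Polynomial R) • M.map Polynomial.C with hAdef
  set B : Matrix (Fin n) (Fin n) R⟦X⟧ :=
    1 - (PowerSeries.X : R⟦X⟧) • M.map (PowerSeries.C) with hBdef
  set N : Matrix (Fin n) (Fin n) R⟦X⟧ :=
    Matrix.of fun i j => PowerSeries.mk fun k => (M ^ k) i j with hNdef
  have hmapA : φ.mapMatrix A = B := by
    ext i j
    simp only [hAdef, hBdef, hφ, RingHom.mapMatrix_apply, Matrix.map_apply, Matrix.sub_apply,
      Matrix.one_apply, Matrix.smul_apply, smul_eq_mul, Matrix.map_apply,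
      Polynomial.coeToPowerSeries.ringHom_apply]
    push_cast [Polynomial.coe_C, Polynomial.coe_X]
    split <;> simp [Polynomial.coe_C, Polynomial.coe_X]
  -- coercion of the determinant
  have hdet : ((A.det : Polynomial R) : R⟦X⟧) = B.det := by
    show φ A.det = B.det
    rw [RingHom.map_det, hmapA]
  -- adjugate transported
  have hadj : φ.mapMatrix A.adjugate = B.adjugate := by
    rw [RingHom.map_adjugate, hmapA]
  -- adjugate of B in terms of N
  have hBN : B * N = 1 := one_sub_X_smul_mul_inv M
  have hadjB : B.adjugate = B.det • N := by
    calc B.adjugate = B.adjugate * (B * N) := by rw [hBN, mul_one]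
    _ = (B.adjugate * B) * N := by rw [mul_assoc]
    _ = (B.det • (1 : Matrix (Fin n) (Fin n) R⟦X⟧)) * N := by rw [Matrix.adjugate_mul]
    _ = B.det • N := by rw [Matrix.smul_mul, one_mul]
  -- the trace series
  have htr : PowerSeries.X * (N * M.map (PowerSeries.C)).trace
      = PowerSeries.mk (fun k => if k = 0 then 0 else (M ^ k).trace) := by
    have hNT : (N * M.map (PowerSeries.C)).trace
        = PowerSeries.mk fun k => (M ^ (k + 1)).trace := by
      ext k
      rw [Matrix.trace]
      simp only [Matrix.diag_apply, Matrix.mul_apply, Matrix.map_apply, Matrix.of_apply,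
        hNdef, map_sum, PowerSeries.coeff_mk]
      have : ∀ (jj ll : Fin n), (PowerSeries.coeff k)
          ((PowerSeries.mk fun k => (M ^ k) jj ll) * PowerSeries.C (M ll jj))
          = (M ^ k) jj ll * M ll jj := by
        intro jj ll
        rw [mul_comm, PowerSeries.coeff_C_mul, PowerSeries.coeff_mk, mul_comm]
      rw [Finset.sum_congr rfl fun jj _ => Finset.sum_congr rfl fun ll _ => this jj ll]
      rw [Matrix.trace]
      refine Finset.sum_congr rfl fun jj _ => ?_
      rw [Matrix.diag_apply, pow_succ, Matrix.mul_apply]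
    rw [hNT]
    ext k
    cases k with
    | zero => simp
    | succ k =>
      rw [PowerSeries.coeff_succ_X_mul, PowerSeries.coeff_mk, PowerSeries.coeff_mk]
      simp
  -- the derivative side
  have hderiv : d⁄dX R ((A.det : Polynomial R) : R⟦X⟧)
      = -((B.adjugate * M.map (PowerSeries.C)).trace) := by
    have h1 : Polynomial.derivative A.det
        = -(A.adjugate * M.map Polynomial.C).trace := by
      rw [hAdef]; exact derivative_one_sub_X_smul M
    rw [PowerSeries.derivative_coe, h1, Polynomial.coe_neg]
    congr 1
    show φ _ = _
    calc φ ((A.adjugate * M.map Polynomial.C).trace)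
        = ((φ : Polynomial R →+ R⟦X⟧).mapMatrix (A.adjugate * M.map Polynomial.C)).trace :=
          AddMonoidHom.map_trace φ _
      _ = (φ.mapMatrix (A.adjugate * M.map Polynomial.C)).trace := rfl
      _ = (B.adjugate * M.map (PowerSeries.C)).trace := by
          have hmapC : φ.mapMatrix (M.map Polynomial.C) = M.map (PowerSeries.C) := by
            ext i j
            simp [hφ, Polynomial.coe_C]
          rw [map_mul, hadj, hmapC]
  calc -(PowerSeries.X * d⁄dX R ((A.det : Polynomial R) : R⟦X⟧))
      = PowerSeries.X * ((B.adjugate * M.map (PowerSeries.C)).trace) := by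
        rw [hderiv]; ring
    _ = PowerSeries.X * (B.det * (N * M.map (PowerSeries.C)).trace) := by
        rw [hadjB, Matrix.smul_mul, Matrix.trace_smul, smul_eq_mul]
    _ = B.det * (PowerSeries.X * (N * M.map (PowerSeries.C)).trace) := by ring
    _ = ((A.det : Polynomial R) : R⟦X⟧) *
        PowerSeries.mk (fun k => if k = 0 then 0 else (M ^ k).trace) := by
        rw [htr, hdet]
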